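/- If ε λ'(0) ρ'(1) > 1, then there exists γ > 0 such that for every initial value p^{(0)} ∈ (0, 1], the density evolution iterates p^{(ℓ)} = ε λ(1 − ρ(1 − p^{(ℓ−1)})) satisfy liminf_{ℓ→∞} p^{(ℓ)} ≥ γ. -/

import Mathlib

open Filter

private lemma eval_mono_aux (q : Polynomial ℝ) (hq : ∀ i, 0 ≤ q.coeff i)
    {x y : ℝ} (hx : 0 ≤ x) (hxy : x ≤ y) : q.eval x ≤ q.eval y := by
  rw [Polynomial.eval_eq_sum_range, Polynomial.eval_eq_sum_range]
  refine Finset.sum_le_sum fun i _ => ?_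
  exact mul_le_mul_of_nonneg_left (pow_le_pow_left₀ hx hxy i) (hq i)

private lemma eval_nonneg_aux (q : Polynomial ℝ) (hq : ∀ i, 0 ≤ q.coeff i)
    {x : ℝ} (hx : 0 ≤ x) : 0 ≤ q.eval x := by
  rw [Polynomial.eval_eq_sum_range]
  exact Finset.sum_nonneg fun i _ => mul_nonneg (hq i) (pow_nonneg hx i)

/-- Stability (diverging side): if `ε λ'(0) ρ'(1) > 1` then there is `γ > 0` such that
for every initial value `p0 ∈ (0,1]` the density-evolution iterates satisfy
`liminf p^{(ℓ)} ≥ γ`. -/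
theorem stmt_12 (lam rho : Polynomial ℝ)
    (hlam : ∀ i, 0 ≤ lam.coeff i) (hrho : ∀ i, 0 ≤ rho.coeff i)
    (hlam0 : lam.eval 0 = 0) (hlam1 : lam.eval 1 = 1) (hrho1 : rho.eval 1 = 1)
    (ε : ℝ) (hε : ε ∈ Set.Ioc (0 : ℝ) 1)
    (hstab : 1 < ε * lam.derivative.eval 0 * rho.derivative.eval 1) :
    ∃ γ > (0 : ℝ), ∀ p0 ∈ Set.Ioc (0 : ℝ) 1,
      γ ≤ liminf (fun ℓ : ℕ =>
          (fun p : ℝ => ε * lam.eval (1 - rho.eval (1 - p)))^[ℓ] p0) atTop := by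
  obtain ⟨hε0, hε1⟩ := hε
  set f : ℝ → ℝ := fun p => ε * lam.eval (1 - rho.eval (1 - p)) with hf
  have hfcont : Continuous f := by
    apply Continuous.mul continuous_const
    exact (lam.continuous_aeval).comp ((continuous_const.sub
      ((rho.continuous_aeval).comp (continuous_const.sub continuous_id))))
  -- f maps [0,1] into [0,1] and is monotone there
  have hmem : ∀ p ∈ Set.Icc (0:ℝ) 1, (1 - rho.eval (1 - p)) ∈ Set.Icc (0:ℝ) 1 := by
    intro p hp
    constructor
    · have : rho.eval (1 - p) ≤ rho.eval 1 := eval_mono_aux rho hrho (by linarith [hp.2]) (by linarith [hp.1])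
      rw [hrho1] at this; linarith
    · have : 0 ≤ rho.eval (1 - p) := eval_nonneg_aux rho hrho (by linarith [hp.2])
      linarith
  have hmaps : ∀ p ∈ Set.Icc (0:ℝ) 1, f p ∈ Set.Icc (0:ℝ) 1 := by
    intro p hp
    obtain ⟨h1, h2⟩ := hmem p hp
    constructor
    · exact mul_nonneg hε0.le (eval_nonneg_aux lam hlam h1)
    · calc ε * lam.eval (1 - rho.eval (1 - p)) ≤ 1 * lam.eval 1 := by
            apply mul_le_mul hε1 (eval_mono_aux lam hlam h1 h2)
              (eval_nonneg_aux lam hlam h1) zero_le_one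
        _ = 1 := by rw [hlam1, one_mul]
  have hmono : ∀ p ∈ Set.Icc (0:ℝ) 1, ∀ q ∈ Set.Icc (0:ℝ) 1, p ≤ q → f p ≤ f q := by
    intro p hp q hq hpq
    apply mul_le_mul_of_nonneg_left _ hε0.le
    apply eval_mono_aux lam hlam (hmem p hp).1
    have : rho.eval (1 - q) ≤ rho.eval (1 - p) :=
      eval_mono_aux rho hrho (by linarith [hq.2]) (by linarith)
    linarith
  -- derivative of f at 0 is ε λ'(0) ρ'(1)
  have hf0 : f 0 = 0 := by
    simp only [hf, sub_zero, hrho1, sub_self, hlam0, mul_zero]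
  have hderiv : HasDerivAt f (ε * lam.derivative.eval 0 * rho.derivative.eval 1) 0 := by
    have h1 : HasDerivAt (fun p : ℝ => 1 - p) (-1) (0:ℝ) := by
      simpa using (hasDerivAt_id (0:ℝ)).const_sub 1
    have h2 : HasDerivAt (fun p : ℝ => rho.eval (1 - p))
        (rho.derivative.eval 1 * (-1)) 0 := by
      have := (Polynomial.hasDerivAt rho ((1:ℝ) - 0)).comp 0 h1
      simpa [Function.comp_def] using this
    have h3 : HasDerivAt (fun p : ℝ => 1 - rho.eval (1 - p))
        (rho.derivative.eval 1) 0 := by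
      have := h2.const_sub 1
      simpa using this
    have h4 : HasDerivAt (fun p : ℝ => lam.eval (1 - rho.eval (1 - p)))
        (lam.derivative.eval 0 * rho.derivative.eval 1) 0 := by
      have h0 : (1:ℝ) - rho.eval (1 - 0) = 0 := by simp [hrho1]
      have := (Polynomial.hasDerivAt lam ((1:ℝ) - rho.eval (1 - 0))).comp 0 h3
      rw [h0] at this
      simpa [Function.comp_def] using this
    have := h4.const_mul ε
    simpa [mul_assoc] using this
  -- there is δ > 0 with p < f p for p ∈ (0, δ)
  have hslope : Tendsto (fun p : ℝ => f p / p) (nhdsWithin 0 {(0:ℝ)}ᶜ)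
      (nhds (ε * lam.derivative.eval 0 * rho.derivative.eval 1)) := by
    have := hasDerivAt_iff_tendsto_slope.mp hderiv
    refine this.congr' ?_
    filter_upwards [self_mem_nhdsWithin] with p hp
    simp [slope, hf0, div_eq_inv_mul]
  have hev : ∀ᶠ p in nhdsWithin 0 {(0:ℝ)}ᶜ, 1 < f p / p :=
    hslope.eventually (eventually_gt_nhds hstab)
  rw [eventually_nhdsWithin_iff] at hev
  obtain ⟨δ, hδ0, hδ⟩ := Metric.eventually_nhds_iff.mp hev
  set γ : ℝ := min (δ / 2) 1 with hγ
  have hγ0 : 0 < γ := lt_min (by linarith) one_pos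
  have hγ1 : γ ≤ 1 := min_le_right _ _
  have hlt : ∀ p, 0 < p → p ≤ γ → p < f p := by
    intro p hp0 hpγ
    have hpδ : |p - 0| < δ := by
      rw [sub_zero, abs_of_pos hp0]
      calc p ≤ γ := hpγ
        _ ≤ δ / 2 := min_le_left _ _
        _ < δ := by linarith
    have := hδ (by simpa [Real.dist_eq] using hpδ) (by simpa using hp0.ne')
    rw [lt_div_iff₀ hp0, one_mul] at this
    exact this
  refine ⟨γ, hγ0, fun p0 hp0 => ?_⟩
  set a : ℕ → ℝ := fun n => f^[n] p0 with ha
  have hstep : ∀ n, a (n + 1) = f (a n) := by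
    intro n; simp [ha, Function.iterate_succ_apply']
  have hrange : ∀ n, a n ∈ Set.Ioc (0:ℝ) 1 := by
    intro n
    induction n with
    | zero => simpa [ha] using hp0
    | succ n ih =>
      rw [hstep]
      have hmem' := hmaps (a n) ⟨ih.1.le, ih.2⟩
      refine ⟨?_, hmem'.2⟩
      rcases le_or_gt (a n) γ with h | h
      · exact lt_trans ih.1 (hlt _ ih.1 h)
      · have : f γ ≤ f (a n) := hmono γ ⟨hγ0.le, hγ1⟩ (a n) ⟨ih.1.le, ih.2⟩ h.le
        have := hlt γ hγ0 le_rfl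
        linarith
  -- either some iterate reaches γ, or contradiction
  have hreach : ∃ N, γ ≤ a N := by
    by_contra hcon
    push_neg at hcon
    have hmonoa : Monotone a := by
      apply monotone_nat_of_le_succ
      intro n
      rw [hstep]
      exact (hlt (a n) (hrange n).1 (hcon n).le).le
    have hbdd : BddAbove (Set.range a) := ⟨1, by rintro _ ⟨n, rfl⟩; exact (hrange n).2⟩
    set L : ℝ := ⨆ n, a n with hL
    have htend : Tendsto a atTop (nhds L) := tendsto_atTop_ciSup hmonoa hbdd
    have hL0 : 0 < L := lt_of_lt_of_le (hrange 0).1 (le_ciSup hbdd 0)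
    have hLγ : L ≤ γ := ciSup_le fun n => (hcon n).le
    have htend2 : Tendsto (fun n => a (n + 1)) atTop (nhds L) :=
      htend.comp (tendsto_add_atTop_nat 1)
    have htend3 : Tendsto (fun n => f (a n)) atTop (nhds (f L)) :=
      (hfcont.tendsto L).comp htend
    have heq : f L = L := by
      apply tendsto_nhds_unique _ htend2
      simpa [hstep] using htend3
    exact absurd heq (ne_of_gt (hlt L hL0 hLγ))
  obtain ⟨N, hN⟩ := hreach
  have htail : ∀ n, N ≤ n → γ ≤ a n := by
    intro n hn
    induction n with
    | zero => simpa [Nat.le_zero.mp hn] using hN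
    | succ n ih =>
      rcases Nat.lt_or_ge N (n + 1) with h | h
      · have hγn := ih (Nat.lt_succ_iff.mp h)
        rw [hstep]
        have h1 : f γ ≤ f (a n) :=
          hmono γ ⟨hγ0.le, hγ1⟩ (a n) ⟨(hrange n).1.le, (hrange n).2⟩ hγn
        have h2 := hlt γ hγ0 le_rfl
        linarith
      · have : N = n + 1 := le_antisymm hn h
        rw [← this]; exact hN
  apply le_liminf_of_le
  · exact isCoboundedUnder_ge_of_le atTop fun n => (hrange n).2
  · filter_upwards [eventually_ge_atTop N] with n hn
    exact htail n hn
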